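/- Fix n > 1 and let (x₁, …, x_n) be a nonzero element of ker(Φ_n). Then the subspace of V(n) spanned by x₁, …, x_n has dimension at least 3. -/

import Mathlib

open Submodule

/-- Index type for the distinguished basis of `V(n)`: pairs `(j,i)` with `i < j`. -/
abbrev VIdx (n : ℕ) := {q : Fin n × Fin n // q.2 < q.1}

/-- Index type for the distinguished basis of `W(n)`: triples `(j,i,k)` with `i < j`, `i ≤ k`. -/
abbrev WIdx (n : ℕ) := {t : Fin n × Fin n × Fin n // t.2.1 < t.1 ∧ t.2.1 ≤ t.2.2}

/-- The vector space `V(n)` over `F`. -/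
abbrev V (F : Type*) [Field F] (n : ℕ) := VIdx n → F

/-- The vector space `W(n)` over `F`. -/
abbrev W (F : Type*) [Field F] (n : ℕ) := WIdx n → F

variable (F : Type*) [Field F] (n : ℕ)

/-- The vector `v[j,i]`, with the conventions `v[i,j] = -v[j,i]` and `v[i,i] = 0`. -/
noncomputable def v (j i : Fin n) : V F n :=
  if h : i < j then Pi.single (⟨(j, i), h⟩ : VIdx n) 1
  else if h' : j < i then -Pi.single (⟨(i, j), h'⟩ : VIdx n) 1
  else 0

/-- The vector `w[j,i,k]` (the basis vector when `i < j` and `i ≤ k`, zero otherwise). -/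
noncomputable def w (j i k : Fin n) : W F n :=
  if h : i < j ∧ i ≤ k then Pi.single (⟨(j, i, k), h⟩ : WIdx n) 1 else 0

/-- The linear map `φ_k : V(n) → W(n)` determined on basis vectors by
`φ_k(v[j,i]) = w[j,i,k]` if `i ≤ k`, and `φ_k(v[j,i]) = w[j,k,i] - w[i,k,j]` if `k < i`. -/
noncomputable def phi (k : Fin n) : V F n →ₗ[F] W F n :=
  (Pi.basisFun F (VIdx n)).constr F fun q =>
    if q.1.2 ≤ k then w F n q.1.1 q.1.2 k
    else w F n q.1.1 k q.1.2 - w F n q.1.2 k q.1.1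

/-- The linear map `Φ_n : V(n)ⁿ → W(n)`, `Φ_n(x₁,…,x_n) = φ₁(x₁) + ⋯ + φ_n(x_n)`. -/
noncomputable def Phi : (Fin n → V F n) →ₗ[F] W F n :=
  ∑ k : Fin n, (phi F n k).comp (LinearMap.proj k)

/-- For `X ≤ V(n)`, the subspace `X* ≤ W(n)`: the span of `φ₁(X) ∪ ⋯ ∪ φ_n(X)`. -/
noncomputable def starV (X : Submodule F (V F n)) : Submodule F (W F n) :=
  ⨆ k : Fin n, X.map (phi F n k)

/-- For `Y ≤ W(n)`, the subspace `Y* ≤ V(n)`: the intersection `⋂ₖ φ_k⁻¹(Y)`. -/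
noncomputable def starW (Y : Submodule F (W F n)) : Submodule F (V F n) :=
  ⨅ k : Fin n, Y.comap (phi F n k)

variable {F n}

lemma w_apply (j i k : Fin n) (t : WIdx n) :
    w F n j i k t = if t.1 = (j, i, k) then 1 else 0 := by
  rcases t with ⟨t, ht⟩
  unfold w
  by_cases h : i < j ∧ i ≤ k
  · rw [dif_pos h, Pi.single_apply]
    simp [Subtype.ext_iff]
  · rw [dif_neg h]
    have : ¬ (t = (j, i, k)) := by rintro rfl; exact h ⟨ht.1, ht.2⟩
    simp [this]

lemma phi_apply (k : Fin n) (y : V F n) (t : WIdx n) :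
    phi F n k y t = ∑ q : VIdx n, y q *
      ((if q.1.2 ≤ k then w F n q.1.1 q.1.2 k
        else w F n q.1.1 k q.1.2 - w F n q.1.2 k q.1.1) t) := by
  unfold phi
  rw [Module.Basis.constr_apply_fintype]
  simp only [Pi.basisFun_equivFun, LinearEquiv.refl_apply, Finset.sum_apply]
  refine Finset.sum_congr rfl fun q _ => ?_
  split_ifs <;> simp [Pi.smul_apply, smul_eq_mul]

lemma Phi_apply (x : Fin n → V F n) (t : WIdx n) :
    Phi F n x t = ∑ k : Fin n, phi F n k (x k) t := by
  unfold Phi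
  simp [Finset.sum_apply]

noncomputable def Xc (x : Fin n → V F n) (k j i : Fin n) : F :=
  if h : i < j then x k ⟨(j, i), h⟩ else if h' : j < i then - x k ⟨(i, j), h'⟩ else 0

lemma Xc_of_lt (x : Fin n → V F n) (k : Fin n) {j i : Fin n} (h : i < j) :
    Xc x k j i = x k ⟨(j, i), h⟩ := dif_pos h

lemma Xc_of_gt (x : Fin n → V F n) (k : Fin n) {j i : Fin n} (h : j < i) :
    Xc x k j i = - x k ⟨(i, j), h⟩ := by
  unfold Xc
  rw [dif_neg (by omega), dif_pos h]

lemma Xc_swap (x : Fin n → V F n) (k j i : Fin n) : Xc x k j i = - Xc x k i j := by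
  rcases lt_trichotomy i j with h | h | h
  · rw [Xc_of_lt x k h, Xc_of_gt x k h, neg_neg]
  · subst h; unfold Xc; simp
  · rw [Xc_of_gt x k h, Xc_of_lt x k h]

lemma Xc_diag (x : Fin n → V F n) (k j : Fin n) : Xc x k j j = 0 := by
  unfold Xc; simp

lemma keyE (x : Fin n → V F n) (hx : Phi F n x = 0) {J I K : Fin n}
    (hIJ : I < J) (hIK : I ≤ K) :
    x K ⟨(J, I), hIJ⟩ + (if I < K then Xc x I J K else 0) = 0 := by
  have h0 : Phi F n x ⟨(J, I, K), ⟨hIJ, hIK⟩⟩ = 0 := by rw [hx]; rfl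
  rw [Phi_apply] at h0
  have hinner : ∀ k : Fin n, phi F n k (x k) (⟨(J, I, K), ⟨hIJ, hIK⟩⟩ : WIdx n) =
      (if k = K then x K ⟨(J, I), hIJ⟩ else 0) +
      (if k = I then (if I < K then Xc x I J K else 0) else 0) := by
    intro k
    rw [phi_apply]
    by_cases hkK : k = K
    · subst hkK
      have hs : ∑ q : VIdx n, x k q *
          ((if q.1.2 ≤ k then w F n q.1.1 q.1.2 k
            else w F n q.1.1 k q.1.2 - w F n q.1.2 k q.1.1)
            (⟨(J, I, k), ⟨hIJ, hIK⟩⟩ : WIdx n)) = x k ⟨(J, I), hIJ⟩ := by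
        rw [Finset.sum_eq_single (⟨(J, I), hIJ⟩ : VIdx n)]
        · dsimp only
          simp only [ite_apply, Pi.sub_apply, w_apply, Prod.mk.injEq, and_true, true_and, mul_ite, mul_one, mul_zero, mul_neg]
          split_ifs <;> (first | ring1 | (exfalso; omega))
        · rintro ⟨⟨j, i⟩, hij⟩ - hne
          have hij' : i < j := hij
          have hne' : ¬(j = J ∧ i = I) := by rintro ⟨rfl, rfl⟩; exact hne rfl
          dsimp only
          simp only [ite_apply, Pi.sub_apply, w_apply, Prod.mk.injEq, and_true, true_and, mul_ite, mul_one, mul_zero, mul_neg]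
          split_ifs <;> (first | ring1 | (exfalso; omega))
        · intro h; exact absurd (Finset.mem_univ _) h
      rw [hs, if_pos rfl]
      split_ifs with h1 h2 <;> first | omega | rw [add_zero]
    · by_cases hkI : k = I
      · subst hkI
        have hkK' : k < K := lt_of_le_of_ne hIK (by omega)
        rw [if_neg hkK, if_pos rfl, if_pos hkK', zero_add]
        rcases lt_trichotomy K J with hKJ | hKJ | hKJ
        · rw [Xc_of_lt x k hKJ]
          rw [Finset.sum_eq_single (⟨(J, K), hKJ⟩ : VIdx n)]
          · dsimp only
            simp only [ite_apply, Pi.sub_apply, w_apply, Prod.mk.injEq, and_true, true_and, mul_ite, mul_one, mul_zero, mul_neg]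
            split_ifs <;> (first | ring1 | (exfalso; omega))
          · rintro ⟨⟨j, i⟩, hij⟩ - hne
            have hij' : i < j := hij
            have hne' : ¬(j = J ∧ i = K) := by rintro ⟨rfl, rfl⟩; exact hne rfl
            dsimp only
            simp only [ite_apply, Pi.sub_apply, w_apply, Prod.mk.injEq, and_true, true_and, mul_ite, mul_one, mul_zero, mul_neg]
            split_ifs <;> (first | ring1 | (exfalso; omega))
          · intro h; exact absurd (Finset.mem_univ _) h
        · subst hKJ
          rw [Xc_diag]
          apply Finset.sum_eq_zero
          rintro ⟨⟨j, i⟩, hij⟩ -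
          have hij' : i < j := hij
          dsimp only
          simp only [ite_apply, Pi.sub_apply, w_apply, Prod.mk.injEq, and_true, true_and, mul_ite, mul_one, mul_zero, mul_neg]
          split_ifs <;> (first | ring1 | (exfalso; omega))
        · rw [Xc_of_gt x k hKJ]
          rw [Finset.sum_eq_single (⟨(K, J), hKJ⟩ : VIdx n)]
          · dsimp only
            simp only [ite_apply, Pi.sub_apply, w_apply, Prod.mk.injEq, and_true, true_and, mul_ite, mul_one, mul_zero, mul_neg]
            split_ifs <;> (first | ring1 | (exfalso; omega))
          · rintro ⟨⟨j, i⟩, hij⟩ - hne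
            have hij' : i < j := hij
            have hne' : ¬(j = K ∧ i = J) := by rintro ⟨rfl, rfl⟩; exact hne rfl
            dsimp only
            simp only [ite_apply, Pi.sub_apply, w_apply, Prod.mk.injEq, and_true, true_and, mul_ite, mul_one, mul_zero, mul_neg]
            split_ifs <;> (first | ring1 | (exfalso; omega))
          · intro h; exact absurd (Finset.mem_univ _) h
      · rw [if_neg hkK, if_neg hkI, add_zero]
        apply Finset.sum_eq_zero
        rintro ⟨⟨j, i⟩, hij⟩ -
        have hij' : i < j := hij
        dsimp only
        simp only [ite_apply, Pi.sub_apply, w_apply, Prod.mk.injEq, and_true, true_and, mul_ite, mul_one, mul_zero, mul_neg]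
        split_ifs <;> (first | ring1 | (exfalso; omega))
  rw [Finset.sum_congr rfl (fun k _ => hinner k)] at h0
  rw [Finset.sum_add_distrib] at h0
  simp only [Finset.sum_ite_eq' Finset.univ, Finset.mem_univ, if_pos] at h0
  exact h0

lemma lemA (x : Fin n → V F n) (hx : Phi F n x = 0) {J I K : Fin n}
    (hIJ : I < J) (hIK : I ≤ K) : Xc x K J I = - Xc x I J K := by
  have h := keyE x hx hIJ hIK
  rw [← Xc_of_lt x K hIJ] at h
  rcases eq_or_lt_of_le hIK with rfl | h'
  · rw [if_neg (lt_irrefl _), add_zero] at h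
    rw [h, neg_zero]
  · rw [if_pos h'] at h
    linear_combination h

lemma lemC1 (x : Fin n → V F n) (hx : Phi F n x = 0) (a b : Fin n) :
    Xc x a b a = 0 := by
  rcases lt_trichotomy a b with h | rfl | h
  · have := keyE x hx h (le_refl a)
    rw [if_neg (lt_irrefl _), add_zero] at this
    rw [Xc_of_lt x a h, this]
  · exact Xc_diag x a a
  · rw [Xc_swap]
    have h2 : Xc x a a b = - Xc x b a a := lemA x hx h h.le
    rw [h2, Xc_diag, neg_zero, neg_zero]

lemma lemC2 (x : Fin n → V F n) (hx : Phi F n x = 0) (a b : Fin n) :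
    Xc x a a b = 0 := by
  rw [Xc_swap, lemC1 x hx, neg_zero]

lemma lemBmid (x : Fin n → V F n) (hx : Phi F n x = 0) {k j i : Fin n}
    (h1 : j < i) (h2 : i < k) : Xc x k j i = - Xc x i j k := by
  have ha : Xc x k i j = - Xc x j i k := lemA x hx h1 (by omega)
  have hb : Xc x i k j = - Xc x j k i := lemA x hx (by omega) (by omega)
  calc Xc x k j i = - Xc x k i j := Xc_swap x k j i
    _ = Xc x j i k := by rw [ha, neg_neg]
    _ = - Xc x j k i := Xc_swap x j i k
    _ = Xc x i k j := by rw [hb]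
    _ = - Xc x i j k := Xc_swap x i k j

lemma lemB (x : Fin n → V F n) (hx : Phi F n x = 0) (k j i : Fin n) :
    Xc x k j i = - Xc x i j k := by
  rcases lt_trichotomy i k with hik | rfl | hik
  · -- i < k
    rcases lt_trichotomy i j with hij | rfl | hij
    · exact lemA x hx hij hik.le
    · rw [Xc_diag, lemC2 x hx, neg_zero]
    · -- j < i < k
      exact lemBmid x hx hij hik
  · rw [lemC1 x hx, neg_zero]
  · -- k < i
    rcases lt_trichotomy k j with hkj | rfl | hkj
    · have := lemA x hx hkj hik.le
      rw [this, neg_neg]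
    · rw [lemC2 x hx, Xc_diag, neg_zero]
    · have := lemBmid x hx hkj hik
      rw [this, neg_neg]

lemma main_lemma (x : Fin n → V F n) (hx : Phi F n x = 0) (hx0 : x ≠ 0) :
    3 ≤ Module.finrank F ↥(Submodule.span F (Set.range x)) := by
  obtain ⟨a, ha⟩ := Function.ne_iff.mp hx0
  obtain ⟨⟨⟨j, i⟩, hij⟩, hq⟩ := Function.ne_iff.mp ha
  have hij' : i < j := hij
  have haX : Xc x a j i ≠ 0 := by rw [Xc_of_lt x a hij']; exact hq
  have hai : a ≠ i := by
    rintro rfl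
    exact haX (lemC1 x hx a j)
  have haj : a ≠ j := by
    rintro rfl
    apply haX
    rw [Xc_swap, lemC1 x hx, neg_zero]
  set y : Fin 3 → V F n := ![x i, x j, x a] with hy
  have hli : LinearIndependent F y := by
    rw [Fintype.linearIndependent_iff]
    intro g hg
    have hg' : ∀ q : VIdx n, g 0 * x i q + g 1 * x j q + g 2 * x a q = 0 := by
      intro q
      have := congrFun hg q
      simpa [hy, Fin.sum_univ_three] using this
    have hpt : ∀ P Q : Fin n,
        g 0 * Xc x i Q P + g 1 * Xc x j Q P + g 2 * Xc x a Q P = 0 := by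
      intro P Q
      rcases lt_trichotomy P Q with h | rfl | h
      · rw [Xc_of_lt x i h, Xc_of_lt x j h, Xc_of_lt x a h]
        exact hg' ⟨(Q, P), h⟩
      · simp [Xc_diag]
      · rw [Xc_of_gt x i h, Xc_of_gt x j h, Xc_of_gt x a h]
        linear_combination - hg' ⟨(P, Q), h⟩
    have hiaj : Xc x i a j = Xc x a j i := by
      rw [lemB x hx i a j, Xc_swap x j a i, neg_neg, lemB x hx j i a,
        Xc_swap x a i j, neg_neg]
    have e2 := hpt i j
    rw [lemC1 x hx, Xc_swap x j j i, lemC1 x hx, neg_zero, mul_zero, mul_zero,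
      zero_add, zero_add] at e2
    have hg2 : g 2 = 0 := by
      rcases mul_eq_zero.mp e2 with h | h
      · exact h
      · exact absurd h haX
    have e0 := hpt j a
    rw [lemC1 x hx, lemC2 x hx, mul_zero, mul_zero, add_zero, add_zero] at e0
    have hg0 : g 0 = 0 := by
      rcases mul_eq_zero.mp e0 with h | h
      · exact h
      · rw [hiaj] at h; exact absurd h haX
    have e1 := hpt i a
    rw [lemC1 x hx, lemC2 x hx, mul_zero, mul_zero, zero_add, add_zero] at e1
    have hg1 : g 1 = 0 := by
      rcases mul_eq_zero.mp e1 with h | h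
      · exact h
      · rw [lemB x hx j a i, Xc_swap x i a j, neg_neg, Xc_swap x i j a, hiaj,
          neg_eq_zero] at h
        exact absurd h haX
    intro s
    fin_cases s
    · exact hg0
    · exact hg1
    · exact hg2
  have h3 : Module.finrank F ↥(Submodule.span F (Set.range y)) = 3 := by
    rw [finrank_span_eq_card hli]
    simp
  have hle : Submodule.span F (Set.range y) ≤ Submodule.span F (Set.range x) := by
    rw [Submodule.span_le]
    rintro _ ⟨s, rfl⟩
    fin_cases s <;> exact Submodule.subset_span ⟨_, rfl⟩
  calc (3 : ℕ) = Module.finrank F ↥(Submodule.span F (Set.range y)) := h3.symm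
    _ ≤ _ := Submodule.finrank_mono hle

/-- If `(x₁,…,x_n)` is a nonzero element of `ker(Φ_n)`, then the span of `x₁,…,x_n`
has dimension at least `3`. -/
theorem statement7 (p : ℕ) [Fact p.Prime] (hp2 : p ≠ 2) (n : ℕ) (hn : 1 < n)
    (x : Fin n → V (ZMod p) n) (hx : Phi (ZMod p) n x = 0) (hx0 : x ≠ 0) :
    3 ≤ Module.finrank (ZMod p) ↥(Submodule.span (ZMod p) (Set.range x)) := by
  exact main_lemma x hx hx0
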